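/- Let f be an n-variable Boolean function and t ∈ [n]. For α ∈ F_2^n let x_α = #{u ∈ F_2^n : f(u) = 1 and f(u ⊕ α) = 0} (so that x_α = n_α/(wt(α))! where n_α counts hypercube paths between supp(f) and its complement with endpoint difference α). Then t-inf(f) = 1 − (1 / (2^{n+t−2} · C(n,t))) Σ_{α ∈ F_2^n} C(n − wt(α), t − wt(α)) · (2^{n−2} − x_α), where C(n − wt(α), t − wt(α)) is taken to be 0 when wt(α) > t. -/

import Mathlib

open Finset

namespace BF

/-- Hamming weight of a vector in `F_2^n`. -/
def wt {n : ℕ} (a : Fin n → ZMod 2) : ℕ := (univ.filter fun i => a i ≠ 0).card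

/-- Normalised Walsh transform `W_f(a) = 2^{-n} Σ_x (-1)^{f(x) ⊕ ⟨x,a⟩}`. -/
noncomputable def walsh {n : ℕ} (f : (Fin n → ZMod 2) → ZMod 2) (a : Fin n → ZMod 2) : ℝ :=
  (1 / 2 ^ n) * ∑ x : Fin n → ZMod 2, (-1 : ℝ) ^ (f x + ∑ i, x i * a i).val

/-- Normalised auto-correlation `C_f(a) = 2^{-n} Σ_x (-1)^{f(x) ⊕ f(x ⊕ a)}`. -/
noncomputable def autocorr {n : ℕ} (f : (Fin n → ZMod 2) → ZMod 2) (a : Fin n → ZMod 2) : ℝ :=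
  (1 / 2 ^ n) * ∑ x : Fin n → ZMod 2, (-1 : ℝ) ^ (f x + f (x + a)).val

/-- Influence of the set of variables `T` on `f`:
`inf_f(T) = 1 - 2^{-#T} Σ_{a ≤ χ_T} C_f(a)`. -/
noncomputable def influence {n : ℕ} (f : (Fin n → ZMod 2) → ZMod 2) (T : Finset (Fin n)) : ℝ :=
  1 - (1 / 2 ^ T.card) *
    ∑ a ∈ univ.filter (fun a : Fin n → ZMod 2 => ∀ i, a i ≠ 0 → i ∈ T), autocorr f a

/-- Total influence `t-inf(f) = (Σ_{#T = t} inf_f(T)) / C(n,t)`. -/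
noncomputable def totalInf {n : ℕ} (f : (Fin n → ZMod 2) → ZMod 2) (t : ℕ) : ℝ :=
  (∑ T ∈ univ.filter (fun T : Finset (Fin n) => T.card = t), influence f T) / (n.choose t)

/-- `p̂_f(k) = Σ_{wt(u) = k} (W_f(u))²`. -/
noncomputable def pHat {n : ℕ} (f : (Fin n → ZMod 2) → ZMod 2) (k : ℕ) : ℝ :=
  ∑ u ∈ univ.filter (fun u : Fin n → ZMod 2 => wt u = k), (walsh f u) ^ 2

/-- `x_a`: the number of `u` with `f(u) = 1` and `f(u ⊕ a) = 0`. -/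
def xcount {n : ℕ} (f : (Fin n → ZMod 2) → ZMod 2) (a : Fin n → ZMod 2) : ℕ :=
  (univ.filter fun u : Fin n → ZMod 2 => f u = 1 ∧ f (u + a) = 0).card


lemma add_self' {n : ℕ} (a : Fin n → ZMod 2) : a + a = 0 := by
  ext i; exact CharTwo.add_self_eq_zero _

lemma card_ne_eq {n : ℕ} (f : (Fin n → ZMod 2) → ZMod 2) (a : Fin n → ZMod 2) :
    (univ.filter fun x : Fin n → ZMod 2 => f x + f (x + a) = 1).card = 2 * xcount f a := by
  have hsplit : (univ.filter fun x : Fin n → ZMod 2 => f x + f (x + a) = 1)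
      = (univ.filter fun x : Fin n → ZMod 2 => f x = 1 ∧ f (x + a) = 0)
        ∪ (univ.filter fun x : Fin n → ZMod 2 => f x = 0 ∧ f (x + a) = 1) := by
    rw [← filter_or]
    apply filter_congr
    intro x _
    have : ∀ u v : ZMod 2, u + v = 1 ↔ ((u = 1 ∧ v = 0) ∨ (u = 0 ∧ v = 1)) := by decide
    simp [this]
  have hdisj : Disjoint (univ.filter fun x : Fin n → ZMod 2 => f x = 1 ∧ f (x + a) = 0)
      (univ.filter fun x : Fin n → ZMod 2 => f x = 0 ∧ f (x + a) = 1) := by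
    rw [disjoint_filter]
    rintro x _ ⟨h1, _⟩ ⟨h0, _⟩
    simp [h1] at h0
  have hcard : (univ.filter fun x : Fin n → ZMod 2 => f x = 0 ∧ f (x + a) = 1).card
      = xcount f a := by
    unfold xcount
    apply card_bij' (fun x _ => x + a) (fun x _ => x + a)
    · intro x hx
      simp only [mem_filter, mem_univ, true_and] at hx ⊢
      rw [add_assoc, add_self' a, add_zero]
      exact ⟨hx.2, hx.1⟩
    · intro x hx
      simp only [mem_filter, mem_univ, true_and] at hx ⊢
      rw [add_assoc, add_self' a, add_zero]
      exact ⟨hx.2, hx.1⟩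
    · intro x _; rw [add_assoc, add_self' a, add_zero]
    · intro x _; rw [add_assoc, add_self' a, add_zero]
  rw [hsplit, card_union_of_disjoint hdisj, hcard, two_mul]
  rfl

lemma autocorr_eq {n : ℕ} (f : (Fin n → ZMod 2) → ZMod 2) (a : Fin n → ZMod 2) :
    (2:ℝ) ^ ((n:ℤ) - 2) * autocorr f a = (2:ℝ) ^ ((n:ℤ) - 2) - (xcount f a : ℝ) := by
  have hsum : ∑ x : Fin n → ZMod 2, (-1 : ℝ) ^ (f x + f (x + a)).val
      = (2:ℝ)^n - 4 * (xcount f a : ℝ) := by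
    have h1 : ∀ z : ZMod 2, ((-1:ℝ))^z.val = 1 - 2 * (if z = 1 then (1:ℝ) else 0) := by
      intro z; rcases (by decide : ∀ z : ZMod 2, z = 0 ∨ z = 1) z with rfl | rfl <;> simp [ZMod.val_one] <;> norm_num
    simp_rw [h1]
    rw [Finset.sum_sub_distrib, Finset.sum_const, ← Finset.mul_sum, Finset.sum_boole,
      card_ne_eq f a]
    simp [Fintype.card_fun]
    ring
  unfold autocorr
  have h4 : (2:ℝ)^((n:ℤ)-2) = 2^n / 4 := by
    rw [zpow_sub₀ (by norm_num), zpow_natCast]; norm_num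
  have h5 : (2:ℝ)^n ≠ 0 := pow_ne_zero _ (by norm_num)
  rw [h4, hsum]
  field_simp

lemma count_supersets {n t : ℕ} (S : Finset (Fin n)) :
    (univ.filter fun T : Finset (Fin n) => T.card = t ∧ S ⊆ T).card
      = if S.card ≤ t then (n - S.card).choose (t - S.card) else 0 := by
  split_ifs with h
  · have hc : Sᶜ.card = n - S.card := by rw [card_compl, Fintype.card_fin]
    rw [← hc, ← card_powersetCard]
    apply card_bij' (fun T _ => T \ S) (fun U _ => U ∪ S)
    · intro T hT
      simp only [mem_filter, mem_univ, true_and] at hT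
      rw [mem_powersetCard]
      refine ⟨fun x hx => ?_, by rw [card_sdiff_of_subset hT.2, hT.1]⟩
      rw [mem_compl]
      exact (mem_sdiff.mp hx).2
    · intro U hU
      rw [mem_powersetCard] at hU
      have hdisj : Disjoint U S := by
        rw [disjoint_left]
        intro x hxU hxS
        exact (mem_compl.mp (hU.1 hxU)) hxS
      simp only [mem_filter, mem_univ, true_and]
      refine ⟨?_, subset_union_right⟩
      rw [card_union_of_disjoint hdisj, hU.2]
      omega
    · intro T hT
      simp only [mem_filter, mem_univ, true_and] at hT
      exact sdiff_union_of_subset hT.2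
    · intro U hU
      rw [mem_powersetCard] at hU
      have hdisj : Disjoint U S := by
        rw [disjoint_left]
        intro x hxU hxS
        exact (mem_compl.mp (hU.1 hxU)) hxS
      exact union_sdiff_cancel_right hdisj
  · rw [card_eq_zero, filter_eq_empty_iff]
    rintro T _ ⟨hc, hsub⟩
    have := card_le_card hsub
    omega

lemma card_filter_card_eq {n t : ℕ} :
    (univ.filter fun T : Finset (Fin n) => T.card = t).card = n.choose t := by
  have : (univ.filter fun T : Finset (Fin n) => T.card = t) = powersetCard t univ := by
    ext T; simp [mem_powersetCard]
  rw [this, card_powersetCard, card_univ, Fintype.card_fin]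

/-- the path-expansion formula for the total influence. -/
theorem totalInf_path_expansion {n : ℕ} (f : (Fin n → ZMod 2) → ZMod 2) (t : ℕ)
    (h1 : 1 ≤ t) (h2 : t ≤ n) :
    totalInf f t = 1 - (1 / ((2 : ℝ) ^ ((n : ℤ) + t - 2) * (n.choose t : ℝ))) *
      ∑ a : Fin n → ZMod 2,
        (if wt a ≤ t then (((n - wt a).choose (t - wt a) : ℕ) : ℝ) else 0) *
          ((2 : ℝ) ^ ((n : ℤ) - 2) - (xcount f a : ℝ)) := by
  classical
  have hC : 0 < n.choose t := Nat.choose_pos h2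
  have hCne : ((n.choose t : ℕ) : ℝ) ≠ 0 := Nat.cast_ne_zero.mpr hC.ne'
  set g : (Fin n → ZMod 2) → ℝ := autocorr f with hg
  have hinf : ∑ T ∈ univ.filter (fun T : Finset (Fin n) => T.card = t), influence f T
      = (n.choose t : ℝ) - (1 / 2 ^ t) *
        ∑ a : Fin n → ZMod 2,
          (if wt a ≤ t then (((n - wt a).choose (t - wt a) : ℕ) : ℝ) else 0) * g a := by
    have step1 : ∀ T ∈ univ.filter (fun T : Finset (Fin n) => T.card = t),
        influence f T = 1 - (1 / 2 ^ t) * ∑ a : Fin n → ZMod 2,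
          (if (∀ i, a i ≠ 0 → i ∈ T) then g a else 0) := by
      intro T hT
      have hTc := (mem_filter.mp hT).2
      rw [influence, hTc, ← sum_filter]
    rw [sum_congr rfl step1, sum_sub_distrib, sum_const, card_filter_card_eq,
      nsmul_eq_mul, mul_one, ← mul_sum, Finset.sum_comm]
    congr 2
    apply sum_congr rfl
    intro a _
    rw [← sum_filter, filter_filter, sum_const, nsmul_eq_mul]
    congr 1
    have hco : (univ.filter fun T : Finset (Fin n) => T.card = t ∧ ∀ i, a i ≠ 0 → i ∈ T)
        = univ.filter fun T : Finset (Fin n) =>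
            T.card = t ∧ (univ.filter fun i => a i ≠ 0) ⊆ T := by
      apply filter_congr
      intro T _
      simp [Finset.subset_iff]
    rw [hco, count_supersets]
    rw [wt]
    split_ifs <;> simp
  rw [totalInf, hinf]
  have hterm : ∀ a : Fin n → ZMod 2,
      (if wt a ≤ t then (((n - wt a).choose (t - wt a) : ℕ) : ℝ) else 0) *
          ((2 : ℝ) ^ ((n : ℤ) - 2) - (xcount f a : ℝ))
        = (2 : ℝ) ^ ((n : ℤ) - 2) *
          ((if wt a ≤ t then (((n - wt a).choose (t - wt a) : ℕ) : ℝ) else 0) * g a) := by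
    intro a
    rw [← autocorr_eq f a]
    ring
  rw [sum_congr rfl (fun a _ => hterm a), ← mul_sum]
  have hp : (2 : ℝ) ^ ((n : ℤ) + t - 2) = (2 : ℝ) ^ ((n : ℤ) - 2) * 2 ^ t := by
    rw [← zpow_natCast (2:ℝ) t, ← zpow_add₀ (by norm_num : (2:ℝ) ≠ 0)]
    ring_nf
  rw [hp]
  have h2ne : ((2:ℝ) ^ ((n:ℤ) - 2)) ≠ 0 := zpow_ne_zero _ (by norm_num)
  have h2tne : ((2:ℝ) ^ t) ≠ 0 := pow_ne_zero _ (by norm_num)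
  field_simp

end BF
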